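/- Fix positive integers M, N, V, and let Ω_{V,1} ⊆ Ω be the set of V-trees (the set of first components of elements of the set attractor Ω_V of the IFS {Ω^V; η^a, a ∈ A}). Then the Hausdorff distance in (Ω, d_Ω) between Ω_{V,1} and Ω satisfies d_{H(Ω)}(Ω_{V,1}, Ω) < 1/V. In particular Ω_{V,1} → Ω in the Hausdorff metric as V → ∞. -/

import Mathlib

open Metric MeasureTheory Filter Set TopologicalSpace
def CodeTree (M N : ℕ) := List (Fin M) → Fin N

lemma codetree_exists_disagree {M N : ℕ} {ω κ : CodeTree M N} (h : ω ≠ κ) :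
    ∃ n : ℕ, ∃ i : List (Fin M), i.length = n ∧ ω i ≠ κ i := by
  obtain ⟨i, hi⟩ := Function.ne_iff.mp h
  exact ⟨i.length, i, rfl, hi⟩

open scoped Classical in
noncomputable def treeDist {M N : ℕ} (ω κ : CodeTree M N) : ℝ :=
  if h : ω = κ then 0
  else (1 / (M : ℝ)) ^ Nat.find (codetree_exists_disagree h)

section
open scoped Classical

variable {M N : ℕ}

lemma treeDist_nonneg (a b : CodeTree M N) : 0 ≤ treeDist a b := by
  unfold treeDist
  by_cases h : a = b
  · simp [h]
  · rw [dif_neg h]; positivity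

lemma treeDist_comm (ω κ : CodeTree M N) : treeDist ω κ = treeDist κ ω := by
  unfold treeDist
  by_cases h : ω = κ
  · subst h; simp
  · rw [dif_neg h, dif_neg (Ne.symm h)]
    congr 1
    exact le_antisymm
      (Nat.find_mono fun n => fun ⟨i, hl, hne⟩ => ⟨i, hl, hne.symm⟩)
      (Nat.find_mono fun n => fun ⟨i, hl, hne⟩ => ⟨i, hl, hne.symm⟩)

lemma treeDist_triangle [NeZero M] (x y z : CodeTree M N) :
    treeDist x y ≤ treeDist x z + treeDist z y := by
  have hMpos : (0 : ℕ) < M := Nat.pos_of_ne_zero (NeZero.ne M)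
  have hM : (0 : ℝ) < 1 / (M : ℝ) := by positivity
  have hM1 : (1 / (M : ℝ)) ≤ 1 := by
    rw [div_le_one (by exact_mod_cast hMpos)]
    exact_mod_cast hMpos
  by_cases hxy : x = y
  · rw [show treeDist x y = 0 by rw [hxy]; simp [treeDist]]
    exact add_nonneg (treeDist_nonneg _ _) (treeDist_nonneg _ _)
  by_cases hxz : x = z
  · subst hxz
    rw [show treeDist x x = 0 by simp [treeDist], zero_add]
  by_cases hzy : z = y
  · subst hzy
    rw [show treeDist z z = 0 by simp [treeDist], add_zero]
  -- all distinct
  have key : Nat.find (codetree_exists_disagree hxz) ≤ Nat.find (codetree_exists_disagree hxy)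
      ∨ Nat.find (codetree_exists_disagree hzy) ≤ Nat.find (codetree_exists_disagree hxy) := by
    obtain ⟨i, hlen, hne⟩ := Nat.find_spec (codetree_exists_disagree hxy)
    by_cases h : x i = z i
    · right
      exact Nat.find_le ⟨i, hlen, by rw [← h]; exact hne⟩
    · left
      exact Nat.find_le ⟨i, hlen, h⟩
  rw [treeDist, dif_neg hxy, treeDist, dif_neg hxz, treeDist, dif_neg hzy]
  rcases key with h | h
  · calc (1 / (M:ℝ)) ^ Nat.find (codetree_exists_disagree hxy)
        ≤ (1 / (M:ℝ)) ^ Nat.find (codetree_exists_disagree hxz) :=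
          pow_le_pow_of_le_one (le_of_lt hM) hM1 h
      _ ≤ _ := le_add_of_nonneg_right (by positivity)
  · calc (1 / (M:ℝ)) ^ Nat.find (codetree_exists_disagree hxy)
        ≤ (1 / (M:ℝ)) ^ Nat.find (codetree_exists_disagree hzy) :=
          pow_le_pow_of_le_one (le_of_lt hM) hM1 h
      _ ≤ _ := le_add_of_nonneg_left (by positivity)

lemma treeDist_eq_zero [NeZero M] {x y : CodeTree M N} (h : treeDist x y = 0) : x = y := by
  by_contra hne
  have hMpos : (0 : ℕ) < M := Nat.pos_of_ne_zero (NeZero.ne M)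
  have hM : (0 : ℝ) < 1 / (M : ℝ) := by positivity
  rw [treeDist, dif_neg hne] at h
  exact (pow_pos hM _).ne' h

end

noncomputable instance {M N : ℕ} [NeZero M] : MetricSpace (CodeTree M N) where
  dist := treeDist
  dist_self := fun ω => by simp [treeDist]
  dist_comm := treeDist_comm
  dist_triangle := fun a b c => treeDist_triangle a c b
  eq_of_dist_eq_zero := treeDist_eq_zero

/-- The index set `A = ({1,…,N} × {1,…,V}^M)^V`; `(a v).1` is the IFS number `n_v`
and `(a v).2 m` is the limb label `v_{v,m}`. -/
abbrev IdxA (M N V : ℕ) := Fin V → Fin N × (Fin M → Fin V)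

/-- The shift `ξ_n : Ω^M → Ω`: bottom node labelled `n`, attached to the `M` given trees. -/
def xi {M N : ℕ} (n : Fin N) (ω : Fin M → CodeTree M N) : CodeTree M N :=
  fun i => match i with
  | [] => n
  | m :: j => ω m j

/-- The map `η^a : Ω^V → Ω^V`. -/
def eta {M N V : ℕ} (a : IdxA M N V) (ω : Fin V → CodeTree M N) : Fin V → CodeTree M N :=
  fun v => xi (a v).1 fun m => ω ((a v).2 m)

section
open scoped Classical

lemma treeDist_le_of_agree {M N : ℕ} [NeZero M] {x y : CodeTree M N} {k : ℕ}
    (h : ∀ i : List (Fin M), i.length < k → x i = y i) :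
    treeDist x y ≤ (1 / (M : ℝ)) ^ k := by
  classical
  unfold treeDist
  by_cases hxy : x = y
  · rw [dif_pos hxy]; positivity
  · rw [dif_neg hxy]
    have hMpos : (0 : ℕ) < M := Nat.pos_of_ne_zero (NeZero.ne M)
    have hk : k ≤ Nat.find (codetree_exists_disagree hxy) := by
      rw [Nat.le_find_iff]
      rintro m hm ⟨i, hl, hne⟩
      exact hne (h i (hl ▸ hm))
    apply pow_le_pow_of_le_one (by positivity)
    · rw [div_le_one (by exact_mod_cast hMpos)]
      exact_mod_cast hMpos
    · exact hk

lemma match_lemma {M N V : ℕ} [NeZero M] [NeZero V]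
    (ΩV : Set (Fin V → CodeTree M N)) (hne : ΩV.Nonempty)
    (hinv : ∀ a : IdxA M N V, ∀ ω ∈ ΩV, eta a ω ∈ ΩV)
    (σ : CodeTree M N) :
    ∀ r L (p : Fin V → List (Fin M)),
      (∀ d, d < r → M ^ (L + d) ≤ V) →
      (∀ v, (p v).length = L) →
      (∀ j : List (Fin M), j.length = L → ∃ v, p v = j) →
      ∃ ω ∈ ΩV, ∀ v (i : List (Fin M)), i.length < r → ω v i = σ (p v ++ i) := by
  intro r
  induction r with
  | zero =>
    intro L p _ _ _
    obtain ⟨ω, hω⟩ := hne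
    exact ⟨ω, hω, fun v i hi => absurd hi (Nat.not_lt_zero _)⟩
  | succ r ih =>
    intro L p hcond hlen hsurj
    rcases Nat.eq_zero_or_pos r with hr | hr
    · -- depth 1 : only roots matter
      subst hr
      obtain ⟨ω', hω'⟩ := hne
      refine ⟨eta (fun v => (σ (p v), fun _ => 0)) ω', hinv _ _ hω', ?_⟩
      intro v i hi
      interval_cases hi' : i.length
      · rw [List.length_eq_zero_iff.mp hi']
        simp [eta, xi, List.append_nil]
    · -- build surjection onto lists of length L+1
      have hML : M ^ (L + 1) ≤ V := by
        have := hcond 1 (by omega)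
        simpa using this
      have hcard : Fintype.card (Fin (L + 1) → Fin M) ≤ Fintype.card (Fin V) := by
        simpa [Fintype.card_fun] using hML
      obtain ⟨e⟩ := Function.Embedding.nonempty_of_card_le hcard
      have hMne : Nonempty (Fin (L + 1) → Fin M) :=
        ⟨fun _ => ⟨0, Nat.pos_of_ne_zero (NeZero.ne M)⟩⟩
      have hesurj : Function.Surjective (Function.invFun e) :=
        Function.invFun_surjective e.injective
      set p' : Fin V → List (Fin M) := fun v => List.ofFn (Function.invFun e v) with hp'
      have hlen' : ∀ v, (p' v).length = L + 1 := fun v => List.length_ofFn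
      have hsurj' : ∀ j : List (Fin M), j.length = L + 1 → ∃ v, p' v = j := by
        intro j hj
        obtain ⟨v, hv⟩ := hesurj (fun i : Fin (L + 1) => j.get (Fin.cast hj.symm i))
        refine ⟨v, ?_⟩
        rw [hp']
        simp only [hv]
        apply List.ext_getElem (by simp [hj])
        intro n h1 h2
        rw [List.getElem_ofFn]
        rfl
      obtain ⟨ω', hω', hmatch⟩ := ih (L + 1) p'
        (fun d hd => by have h := hcond (d + 1) (by omega); rw [show L + 1 + d = L + (d + 1) by omega]; exact h)
        hlen' hsurj'
      set a : IdxA M N V := fun v =>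
        (σ (p v), fun m => (hsurj' (p v ++ [m]) (by simp [hlen])).choose) with ha
      refine ⟨eta a ω', hinv _ _ hω', ?_⟩
      intro v i hi
      match i with
      | [] => simp [eta, xi, ha, List.append_nil]
      | m :: j =>
        have hj : j.length < r := by simpa using hi
        have h1 : eta a ω' v (m :: j) = ω' ((a v).2 m) j := rfl
        rw [h1, hmatch _ _ hj,
          (hsurj' (p v ++ [m]) (by simp [hlen])).choose_spec]
        simp

end

/-- **`V`-trees approximate all code trees.** Let `Ω_{V,1}` be the set of `V`-trees, the
set of first components of the set attractor `Ω_V` of the IFS `{Ω^V; η^a, a ∈ A}`.  Then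
the Hausdorff distance between `Ω_{V,1}` and `Ω` in `(Ω, d_Ω)` is less than `1/V`. -/
theorem stmt_12 {M N V : ℕ} [NeZero M] [NeZero V] (hN : 0 < N)
    (ΩV : Set (Fin V → CodeTree M N))
    (hne : ΩV.Nonempty) (hcomp : IsCompact ΩV)
    (hinv : ΩV = ⋃ a : IdxA M N V, eta a '' ΩV)
    (huniq : ∀ S : Set (Fin V → CodeTree M N), S.Nonempty → IsCompact S →
      S = ⋃ a : IdxA M N V, eta a '' S → S = ΩV) :
    hausdorffDist {σ : CodeTree M N | ∃ ω ∈ ΩV, ω 0 = σ}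
      (Set.univ : Set (CodeTree M N)) < 1 / (V : ℝ) := by
  have hVpos : (0 : ℕ) < V := Nat.pos_of_ne_zero (NeZero.ne V)
  have hMpos : (0 : ℕ) < M := Nat.pos_of_ne_zero (NeZero.ne M)
  have hVR : (0 : ℝ) < 1 / (V : ℝ) := by positivity
  have hinv' : ∀ a : IdxA M N V, ∀ ω ∈ ΩV, eta a ω ∈ ΩV := by
    intro a ω hω
    rw [hinv]
    exact Set.mem_iUnion.mpr ⟨a, Set.mem_image_of_mem _ hω⟩
  by_cases hN1 : N = 1
  · -- trivial case: only one code tree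
    subst hN1
    have hsub : Subsingleton (CodeTree M 1) := ⟨fun x y => funext fun i => Subsingleton.elim _ _⟩
    have hS : {σ : CodeTree M 1 | ∃ ω ∈ ΩV, ω 0 = σ} = (Set.univ : Set (CodeTree M 1)) := by
      obtain ⟨ω, hω⟩ := hne
      ext σ
      simp only [Set.mem_setOf_eq, Set.mem_univ, iff_true]
      exact ⟨ω, hω, Subsingleton.elim _ _⟩
    rw [hS, Metric.hausdorffDist_self_zero]
    exact hVR
  by_cases hM1 : M = 1
  · -- contradiction: for M = 1, N ≥ 2 the attractor cannot be compact
    exfalso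
    subst hM1
    have hN2 : 2 ≤ N := by omega
    -- the space is discrete
    have hdisc : ∀ f g : Fin V → CodeTree 1 N, dist f g < 1 → f = g := by
      intro f g hfg
      funext v
      by_contra hfv
      have h1 : dist (f v) (g v) ≤ dist f g := dist_le_pi_dist f g v
      have h2 : dist (f v) (g v) = 1 := by
        show treeDist (f v) (g v) = 1
        rw [treeDist, dif_neg hfv]
        norm_num
      linarith
    have hopen : ∀ f : Fin V → CodeTree 1 N, IsOpen {f} := by
      intro f
      have : {f} = Metric.ball f 1 := by
        ext g
        simp only [Set.mem_singleton_iff, Metric.mem_ball]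
        constructor
        · rintro rfl; simpa using zero_lt_one
        · intro hg; exact (hdisc g f hg).symm ▸ rfl
      rw [this]
      exact Metric.isOpen_ball
    haveI : DiscreteTopology (Fin V → CodeTree 1 N) :=
      discreteTopology_iff_isOpen_singleton.mpr hopen
    have hfin : ΩV.Finite := hcomp.finite (IsDiscrete.of_nhdsWithin fun x _ => le_of_le_of_eq nhdsWithin_le_nhds (congrFun (nhds_discrete _) x))
    -- but ΩV is infinite
    set n1 : Fin N := ⟨0, by omega⟩ with hn1
    set n2 : Fin N := ⟨1, by omega⟩ with hn2
    set g : Fin N → (Fin V → CodeTree 1 N) → (Fin V → CodeTree 1 N) :=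
      fun c ω => eta (fun v => (c, fun _ => v)) ω with hg
    have hgmem : ∀ c ω, ω ∈ ΩV → g c ω ∈ ΩV := fun c ω hω => hinv' _ _ hω
    have hgiter : ∀ c ω, ω ∈ ΩV → ∀ k, (g c)^[k] ω ∈ ΩV := by
      intro c ω hω k
      induction k with
      | zero => exact hω
      | succ k ih => rw [Function.iterate_succ_apply']; exact hgmem _ _ ih
    have heval : ∀ (c : Fin N) (k : ℕ) (ω : Fin V → CodeTree 1 N) (v : Fin V)
        (i : List (Fin 1)), ((g c)^[k] ω) v i =
          if i.length < k then c else ω v (i.drop k) := by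
      intro c k
      induction k with
      | zero => intro ω v i; simp
      | succ k ih =>
        intro ω v i
        rw [Function.iterate_succ_apply']
        match i with
        | [] =>
          have : (g c ((g c)^[k] ω)) v [] = c := rfl
          rw [this, if_pos (by simp)]
        | m :: j =>
          have : (g c ((g c)^[k] ω)) v (m :: j) = ((g c)^[k] ω) v j := rfl
          rw [this, ih]
          simp [Nat.succ_lt_succ_iff]
      
    obtain ⟨ω0, hω0⟩ := hne
    set F : ℕ → (Fin V → CodeTree 1 N) := fun k => (g n1)^[k] (g n2 ω0) with hF
    have hFmem : ∀ k, F k ∈ ΩV := fun k => hgiter _ _ (hgmem _ _ hω0) k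
    have hFval : ∀ k j, k < j → F k ≠ F j := by
      intro k j hkj hEq
      have h1 : F k 0 (List.replicate k 0) = n2 := by
        rw [hF]
        simp only
        rw [heval, if_neg (by simp), List.drop_eq_nil_of_le (by simp)]
        rfl
      have h2 : F j 0 (List.replicate k 0) = n1 := by
        rw [hF]
        simp only
        rw [heval, if_pos (by simpa using hkj)]
      rw [hEq, h2] at h1
      exact absurd (congrArg Fin.val h1) (by simp [hn1, hn2])
    have hinj : Function.Injective F := by
      intro a b hab
      rcases lt_trichotomy a b with h | h | h
      · exact absurd hab (hFval a b h)
      · exact h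
      · exact absurd hab.symm (hFval b a h)
    exact (Set.infinite_of_injective_forall_mem hinj hFmem) hfin
  · -- main case : M ≥ 2
    have hM2 : 2 ≤ M := by omega
    have hex : ∃ k, V < M ^ k := ⟨V, Nat.lt_pow_self (n := V) hM2⟩
    classical
    set k := Nat.find hex with hk
    have hkspec : V < M ^ k := Nat.find_spec hex
    have hcond : ∀ d, d < k → M ^ (0 + d) ≤ V := by
      intro d hd
      rw [Nat.zero_add]
      exact Nat.le_of_not_lt (Nat.find_min hex hd)
    obtain _ := hVpos
    have key : ∀ σ : CodeTree M N, ∃ ω ∈ ΩV, ∀ i : List (Fin M),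
        i.length < k → ω 0 i = σ i := by
      intro σ
      obtain ⟨ω, hω, hmatch⟩ := match_lemma ΩV hne hinv' σ k 0 (fun _ => [])
        hcond (fun v => rfl)
        (fun j hj => ⟨0, (List.length_eq_zero_iff.mp hj).symm⟩)
      exact ⟨ω, hω, fun i hi => by simpa using hmatch 0 i hi⟩
    have hrpos : (0 : ℝ) ≤ (1 / (M : ℝ)) ^ k := by positivity
    have hbound : hausdorffDist {σ : CodeTree M N | ∃ ω ∈ ΩV, ω 0 = σ}
        (Set.univ : Set (CodeTree M N)) ≤ (1 / (M : ℝ)) ^ k := by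
      apply Metric.hausdorffDist_le_of_mem_dist hrpos
      · intro x hx
        exact ⟨x, Set.mem_univ x, by simpa using hrpos⟩
      · intro y _
        obtain ⟨ω, hω, hmatch⟩ := key y
        refine ⟨ω 0, ⟨ω, hω, rfl⟩, ?_⟩
        exact treeDist_le_of_agree fun i hi => (hmatch i hi).symm
    have hlt : (1 / (M : ℝ)) ^ k < 1 / (V : ℝ) := by
      rw [one_div, inv_pow, ← one_div]
      apply one_div_lt_one_div_of_lt (by exact_mod_cast hVpos)
      exact_mod_cast hkspec
    exact lt_of_le_of_lt hbound hlt
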